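/- Let G be a simple connected graph and v_i a vertex. Then 𝓛E_G(v_i) ≤ √( (1/d_i) · Σ_{w ∼ v_i} 1/d_w ), where the sum runs over the neighbors w of v_i. Equality holds if and only if G is a star and v_i is its center (i.e., d_i = m). -/

import Mathlib

open Matrix BigOperators Finset

open scoped ComplexOrder in
/-- The positive semidefinite square root of a positive semidefinite matrix
(the definition `Matrix.PosSemidef.sqrt` of the older Mathlib, no longer present). -/
noncomputable def Matrix.PosSemidef.sqrt {n : Type*} [Fintype n] [DecidableEq n] {𝕜 : Type*}
    [RCLike 𝕜] {A : Matrix n n 𝕜} (hA : A.PosSemidef) : Matrix n n 𝕜 :=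
  hA.1.eigenvectorUnitary.1 * diagonal ((↑) ∘ (√·) ∘ hA.1.eigenvalues) *
  (star hA.1.eigenvectorUnitary : Matrix n n 𝕜)

section PortSqrt

open scoped MatrixOrder

lemma Matrix.PosSemidef.sqrt_eq_cfc {m : Type*} [Fintype m] [DecidableEq m]
    {A : Matrix m m ℝ} (hA : A.PosSemidef) : hA.sqrt = cfc Real.sqrt A := by
  rw [hA.1.cfc_eq]
  simp [Matrix.PosSemidef.sqrt, Matrix.IsHermitian.cfc, Unitary.conjStarAlgAut_apply]

lemma Matrix.PosSemidef.spec_nonneg {m : Type*} [Fintype m] [DecidableEq m]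
    {A : Matrix m m ℝ} (hA : A.PosSemidef) : ∀ x ∈ spectrum ℝ A, 0 ≤ x :=
  fun x hx => (Matrix.posSemidef_iff_isHermitian_and_spectrum_nonneg.mp hA).2 hx

lemma Matrix.PosSemidef.sqrt_mul_self {m : Type*} [Fintype m] [DecidableEq m]
    {A : Matrix m m ℝ} (hA : A.PosSemidef) : hA.sqrt * hA.sqrt = A := by
  have hsa : IsSelfAdjoint A := hA.1.isSelfAdjoint
  rw [hA.sqrt_eq_cfc, ← cfc_mul Real.sqrt Real.sqrt A]
  conv_rhs => rw [← cfc_id' ℝ A]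
  exact cfc_congr fun x hx => Real.mul_self_sqrt (hA.spec_nonneg x hx)

lemma Matrix.PosSemidef.posSemidef_sqrt {m : Type*} [Fintype m] [DecidableEq m]
    {A : Matrix m m ℝ} (hA : A.PosSemidef) : hA.sqrt.PosSemidef := by
  have hsa : IsSelfAdjoint A := hA.1.isSelfAdjoint
  rw [hA.sqrt_eq_cfc, ← Matrix.nonneg_iff_posSemidef]
  exact cfc_nonneg fun x _ => Real.sqrt_nonneg x

lemma Matrix.PosSemidef.eq_sqrt_of_sq_eq {m : Type*} [Fintype m] [DecidableEq m]
    {A B : Matrix m m ℝ} (hA : A.PosSemidef) (hB : B.PosSemidef) (hAB : A ^ 2 = B) :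
    A = hB.sqrt := by
  have hsa : IsSelfAdjoint A := hA.1.isSelfAdjoint
  rw [hB.sqrt_eq_cfc, ← hAB, ← cfc_pow_id (R := ℝ) A 2, ← cfc_comp Real.sqrt (fun x => x ^ 2) A]
  conv_lhs => rw [← cfc_id' ℝ A]
  exact cfc_congr fun x hx => (Real.sqrt_sq (hA.spec_nonneg x hx)).symm

end PortSqrt

/-- The absolute value of a real matrix `B`, defined as `(B * Bᵀ)^(1/2)`. -/
noncomputable def matAbs {n : ℕ} (B : Matrix (Fin n) (Fin n) ℝ) : Matrix (Fin n) (Fin n) ℝ :=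
  (Matrix.conjTranspose_eq_transpose_of_trivial B ▸
    Matrix.posSemidef_self_mul_conjTranspose B : (B * Bᵀ).PosSemidef).sqrt

/-- The (adjacency) energy of the vertex `i` of the graph `G`: `|A|_{ii}`. -/
noncomputable def vertexEnergy {n : ℕ} (G : SimpleGraph (Fin n)) [DecidableRel G.Adj]
    (i : Fin n) : ℝ :=
  matAbs (G.adjMatrix ℝ) i i

/-- The Laplacian energy of the vertex `i` of the graph `G`: `(|L - (2m/n) I|)_{ii}`. -/
noncomputable def vertexLapEnergy {n : ℕ} (G : SimpleGraph (Fin n)) [DecidableRel G.Adj]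
    (i : Fin n) : ℝ :=
  matAbs (G.lapMatrix ℝ - ((2 * (G.edgeFinset.card : ℝ)) / n) • 1) i i

/-- The normalized Laplacian `𝓛 = I - D^{-1/2} A D^{-1/2}` of the graph `G`. -/
noncomputable def normLap {n : ℕ} (G : SimpleGraph (Fin n)) [DecidableRel G.Adj] :
    Matrix (Fin n) (Fin n) ℝ :=
  1 - Matrix.diagonal (fun i => (Real.sqrt (G.degree i))⁻¹) * G.adjMatrix ℝ *
      Matrix.diagonal (fun i => (Real.sqrt (G.degree i))⁻¹)

/-- The normalized Laplacian energy of the vertex `i` of the graph `G`: `(|𝓛 - I|)_{ii}`. -/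
noncomputable def vertexNormLapEnergy {n : ℕ} (G : SimpleGraph (Fin n)) [DecidableRel G.Adj]
    (i : Fin n) : ℝ :=
  matAbs (normLap G - 1) i i

/-! ### Auxiliary lemmas -/

lemma matAbs_eq' {n : ℕ} (B : Matrix (Fin n) (Fin n) ℝ) (h : (B * Bᵀ).PosSemidef) :
    matAbs B = h.sqrt := rfl

lemma psd_diag_nonneg' {n : ℕ} {M : Matrix (Fin n) (Fin n) ℝ} (hM : M.PosSemidef) (i : Fin n) :
    0 ≤ M i i := by
  exact hM.diag_nonneg

lemma psd_symm_apply' {n : ℕ} {S : Matrix (Fin n) (Fin n) ℝ} (hS : S.PosSemidef) (a b : Fin n) :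
    S a b = S b a := by
  have hsym : Sᵀ = S := by
    have := hS.isHermitian
    rwa [Matrix.IsHermitian, Matrix.conjTranspose_eq_transpose_of_trivial] at this
  conv_lhs => rw [← hsym, Matrix.transpose_apply]

lemma sq_diag' {n : ℕ} {S : Matrix (Fin n) (Fin n) ℝ} (hS : S.PosSemidef) (i : Fin n) :
    (S * S) i i = ∑ k, (S i k)^2 := by
  rw [Matrix.mul_apply]
  exact Finset.sum_congr rfl fun k _ => by rw [psd_symm_apply' hS k i, sq]

lemma diag_le_sqrt' {n : ℕ} {S : Matrix (Fin n) (Fin n) ℝ} (hS : S.PosSemidef) (i : Fin n) :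
    S i i ≤ Real.sqrt ((S * S) i i) := by
  rw [sq_diag' hS i]
  have h1 : (S i i)^2 ≤ ∑ k, (S i k)^2 :=
    Finset.single_le_sum (f := fun k => (S i k)^2) (fun k _ => sq_nonneg _) (Finset.mem_univ i)
  calc S i i = Real.sqrt ((S i i)^2) := by rw [Real.sqrt_sq (psd_diag_nonneg' hS i)]
    _ ≤ _ := Real.sqrt_le_sqrt h1

lemma row_zero_of_diag_eq_sqrt' {n : ℕ} {S : Matrix (Fin n) (Fin n) ℝ} (hS : S.PosSemidef)
    (i : Fin n) (h : S i i = Real.sqrt ((S * S) i i)) : ∀ k, k ≠ i → S i k = 0 := by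
  have h0 : 0 ≤ ∑ k, (S i k)^2 := Finset.sum_nonneg fun k _ => sq_nonneg _
  have hsq : (S i i)^2 = ∑ k, (S i k)^2 := by
    rw [h, sq_diag' hS i, Real.sq_sqrt h0]
  have key : ∑ k ∈ Finset.univ.erase i, (S i k)^2 = 0 := by
    have h2 : ∑ k, (S i k)^2 = (S i i)^2 + ∑ k ∈ Finset.univ.erase i, (S i k)^2 :=
      (Finset.add_sum_erase _ _ (Finset.mem_univ i)).symm
    linarith
  intro k hk
  have := (Finset.sum_eq_zero_iff_of_nonneg (fun j _ => sq_nonneg (S i j))).mp key k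
    (Finset.mem_erase.mpr ⟨hk, Finset.mem_univ k⟩)
  exact pow_eq_zero_iff (by norm_num) |>.mp this

lemma sqrt_inv_mul_self' (m : ℕ) : (Real.sqrt m)⁻¹ * (Real.sqrt m)⁻¹ = (m:ℝ)⁻¹ := by
  rw [← mul_inv, Real.mul_self_sqrt (Nat.cast_nonneg m)]

variable {n : ℕ} (G : SimpleGraph (Fin n)) [DecidableRel G.Adj]

lemma B_apply' (x y : Fin n) : (normLap G - 1) x y =
    -((Real.sqrt (G.degree x))⁻¹ * (G.adjMatrix ℝ) x y * (Real.sqrt (G.degree y))⁻¹) := by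
  have h : normLap G - 1 = -(Matrix.diagonal (fun i => (Real.sqrt (G.degree i))⁻¹) * G.adjMatrix ℝ *
      Matrix.diagonal (fun i => (Real.sqrt (G.degree i))⁻¹)) := by
    rw [normLap]; exact sub_sub_cancel_left _ _
  rw [h, Matrix.neg_apply, Matrix.mul_diagonal, Matrix.diagonal_mul]

lemma M_apply' (x y : Fin n) :
    ((normLap G - 1) * (normLap G - 1)ᵀ : Matrix (Fin n) (Fin n) ℝ) x y =
    ∑ k, ((Real.sqrt (G.degree x))⁻¹ * (G.adjMatrix ℝ) x k * (Real.sqrt (G.degree k))⁻¹) *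
      ((Real.sqrt (G.degree y))⁻¹ * (G.adjMatrix ℝ) y k * (Real.sqrt (G.degree k))⁻¹) := by
  rw [Matrix.mul_apply]
  refine Finset.sum_congr rfl fun k _ => ?_
  rw [Matrix.transpose_apply, B_apply', B_apply', neg_mul_neg]

lemma M_diag' (i : Fin n) :
    ((normLap G - 1) * (normLap G - 1)ᵀ : Matrix (Fin n) (Fin n) ℝ) i i =
    (1 / (G.degree i : ℝ)) * ∑ w ∈ G.neighborFinset i, 1 / (G.degree w : ℝ) := by
  rw [M_apply']
  have key : ∀ k, ((Real.sqrt (G.degree i))⁻¹ * (G.adjMatrix ℝ) i k * (Real.sqrt (G.degree k))⁻¹) *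
      ((Real.sqrt (G.degree i))⁻¹ * (G.adjMatrix ℝ) i k * (Real.sqrt (G.degree k))⁻¹) =
      if G.Adj i k then (G.degree i : ℝ)⁻¹ * (G.degree k : ℝ)⁻¹ else 0 := by
    intro k
    by_cases h : G.Adj i k
    · simp only [h, SimpleGraph.adjMatrix_apply, if_true, mul_one]
      rw [show ((Real.sqrt (G.degree i))⁻¹ * (Real.sqrt (G.degree k))⁻¹) *
          ((Real.sqrt (G.degree i))⁻¹ * (Real.sqrt (G.degree k))⁻¹) =
          ((Real.sqrt (G.degree i))⁻¹ * (Real.sqrt (G.degree i))⁻¹) *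
          ((Real.sqrt (G.degree k))⁻¹ * (Real.sqrt (G.degree k))⁻¹) by ring,
        sqrt_inv_mul_self', sqrt_inv_mul_self']
    · simp [h]
  simp_rw [key]
  rw [Finset.sum_ite, Finset.sum_const_zero, add_zero, ← Finset.mul_sum]
  rw [SimpleGraph.neighborFinset_eq_filter]
  simp [one_div, Finset.mul_sum]

lemma walk_closed' {V : Type*} {G : SimpleGraph V} {C : Set V}
    (hC : ∀ u ∈ C, ∀ v, G.Adj u v → v ∈ C) :
    ∀ {u v : V}, G.Walk u v → u ∈ C → v ∈ C := by
  intro u v p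
  induction p with
  | nil => exact id
  | cons h q ih => exact fun hu => ih (hC _ hu _ h)

theorem stmt12 {n : ℕ} (G : SimpleGraph (Fin n)) [DecidableRel G.Adj]
    (hconn : G.Connected) (i : Fin n) :
    vertexNormLapEnergy G i ≤
        Real.sqrt ((1 / (G.degree i : ℝ)) *
          ∑ w ∈ G.neighborFinset i, 1 / (G.degree w : ℝ)) ∧
      (vertexNormLapEnergy G i =
          Real.sqrt ((1 / (G.degree i : ℝ)) *
            ∑ w ∈ G.neighborFinset i, 1 / (G.degree w : ℝ)) ↔
        G.degree i = G.edgeFinset.card) := by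

  -- basic objects
  have hMpsd : ((normLap G - 1) * (normLap G - 1)ᵀ : Matrix (Fin n) (Fin n) ℝ).PosSemidef :=
    Matrix.conjTranspose_eq_transpose_of_trivial (normLap G - 1) ▸
      Matrix.posSemidef_self_mul_conjTranspose (normLap G - 1)
  have habs : matAbs (normLap G - 1) = hMpsd.sqrt := rfl
  have hS : (matAbs (normLap G - 1)).PosSemidef := habs ▸ hMpsd.posSemidef_sqrt
  have hSS : matAbs (normLap G - 1) * matAbs (normLap G - 1) =
      ((normLap G - 1) * (normLap G - 1)ᵀ : Matrix (Fin n) (Fin n) ℝ) := by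
    rw [habs]; exact hMpsd.sqrt_mul_self
  have hA0 : ∀ a b : Fin n, (0:ℝ) ≤ (G.adjMatrix ℝ) a b := by
    intro a b; rw [SimpleGraph.adjMatrix_apply]; split <;> norm_num
  have hineq : vertexNormLapEnergy G i ≤
      Real.sqrt ((1 / (G.degree i : ℝ)) * ∑ w ∈ G.neighborFinset i, 1 / (G.degree w : ℝ)) := by
    rw [← M_diag' G i, ← hSS]
    exact diag_le_sqrt' hS i
  refine ⟨hineq, ?_⟩
  rcases Nat.lt_or_ge n 2 with hn | hn
  · -- degenerate case `n ≤ 1`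
    have hn1 : n = 1 := by
      interval_cases n
      · exact i.elim0
      · rfl
    subst hn1
    have hnadj : ∀ a b : Fin 1, ¬ G.Adj a b := by
      intro a b hab; exact G.ne_of_adj hab (Subsingleton.elim a b)
    have hNempty : G.neighborFinset i = ∅ :=
      Finset.eq_empty_of_forall_notMem fun w hw =>
        hnadj i w ((SimpleGraph.mem_neighborFinset _ _ _).mp hw)
    have hdeg : ∀ v : Fin 1, G.degree v = 0 := by
      intro v
      rw [← SimpleGraph.card_neighborFinset_eq_degree, Finset.card_eq_zero]
      exact Finset.eq_empty_of_forall_notMem fun w hw =>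
        hnadj v w ((SimpleGraph.mem_neighborFinset _ _ _).mp hw)
    have hE : G.edgeFinset.card = 0 := by
      have hsum := G.sum_degrees_eq_twice_card_edges
      simp only [hdeg, Finset.sum_const_zero] at hsum
      omega
    have hB0 : (normLap G - 1 : Matrix (Fin 1) (Fin 1) ℝ) = 0 := by
      ext x y
      rw [B_apply']
      simp [SimpleGraph.adjMatrix_apply, hnadj x y]
    have hsq : matAbs (normLap G - 1) = 0 := by
      rw [habs]
      exact ((Matrix.PosSemidef.zero (n := Fin 1) (R := ℝ)).eq_sqrt_of_sq_eq hMpsd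
        (by rw [hB0]; simp)).symm
    have h1 : vertexNormLapEnergy G i = 0 := by
      show matAbs (normLap G - 1) i i = 0
      rw [hsq]; rfl
    have h2 : Real.sqrt ((1 / (G.degree i : ℝ)) *
        ∑ w ∈ G.neighborFinset i, 1 / (G.degree w : ℝ)) = 0 := by
      rw [hNempty]; simp
    rw [h1, h2, hdeg i, hE]
    simp
  · -- main case `2 ≤ n`
    have hNontriv : Nontrivial (Fin n) :=
      ⟨⟨⟨0, by omega⟩, ⟨1, by omega⟩, fun h => by simpa using congrArg Fin.val h⟩⟩
    have hdpos : ∀ v : Fin n, 0 < G.degree v := by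
      intro v
      obtain ⟨w, hw⟩ := exists_ne v
      obtain ⟨p⟩ := hconn v w
      cases p with
      | nil => exact absurd rfl hw
      | cons h q => exact (G.degree_pos_iff_exists_adj v).mpr ⟨_, h⟩
    constructor
    · -- equality implies star
      intro h
      have h' : matAbs (normLap G - 1) i i =
          Real.sqrt ((matAbs (normLap G - 1) * matAbs (normLap G - 1) : Matrix (Fin n) (Fin n) ℝ) i i) := by
        rw [hSS, M_diag' G i]; exact h
      have hrow : ∀ k, k ≠ i → matAbs (normLap G - 1) i k = 0 :=
        row_zero_of_diag_eq_sqrt' hS i h'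
      have hMrow : ∀ k, k ≠ i →
          ((normLap G - 1) * (normLap G - 1)ᵀ : Matrix (Fin n) (Fin n) ℝ) k i = 0 := by
        intro k hk
        rw [← hSS, Matrix.mul_apply]
        apply Finset.sum_eq_zero
        intro j _
        by_cases hj : j = i
        · rw [hj, psd_symm_apply' hS k i, hrow k hk, zero_mul]
        · rw [psd_symm_apply' hS j i, hrow j hj, mul_zero]
      have hsqrtpos : ∀ v : Fin n, (0:ℝ) < (Real.sqrt (G.degree v))⁻¹ := by
        intro v
        exact inv_pos.mpr (Real.sqrt_pos.mpr (by exact_mod_cast hdpos v))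
      have hnc : ∀ k, k ≠ i → ∀ j, ¬ (G.Adj i j ∧ G.Adj k j) := by
        rintro k hk j ⟨hij, hkj⟩
        have h0 := hMrow k hk
        rw [M_apply'] at h0
        have hterm := (Finset.sum_eq_zero_iff_of_nonneg ?_).mp h0 j (Finset.mem_univ j)
        · rw [SimpleGraph.adjMatrix_apply, SimpleGraph.adjMatrix_apply,
            if_pos hkj, if_pos hij, mul_one, mul_one] at hterm
          have hpos : (0:ℝ) < ((Real.sqrt (G.degree k))⁻¹ * (Real.sqrt (G.degree j))⁻¹) *
              ((Real.sqrt (G.degree i))⁻¹ * (Real.sqrt (G.degree j))⁻¹) := by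
            have := hsqrtpos k; have := hsqrtpos j; have := hsqrtpos i
            positivity
          exact absurd hterm (ne_of_gt hpos)
        · intro x _
          exact mul_nonneg
            (mul_nonneg (mul_nonneg (hsqrtpos k).le (hA0 _ _)) (hsqrtpos x).le)
            (mul_nonneg (mul_nonneg (hsqrtpos i).le (hA0 _ _)) (hsqrtpos x).le)
      have hleaf : ∀ j k, G.Adj i j → G.Adj j k → k = i := by
        intro j k hij hjk
        by_contra hk
        exact hnc k hk j ⟨hij, hjk.symm⟩
      have hstar : ∀ v, v = i ∨ G.Adj i v := by
        intro v
        obtain ⟨p⟩ := hconn i v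
        refine walk_closed' (C := {v | v = i ∨ G.Adj i v}) ?_ p (Or.inl rfl)
        rintro u (rfl | hu) v huv
        · exact Or.inr huv
        · exact Or.inl (hleaf u v hu huv)
      have hdeg1 : ∀ v, v ≠ i → G.degree v = 1 := by
        intro v hv
        have hiv : G.Adj i v := (hstar v).resolve_left hv
        have hNv : G.neighborFinset v = {i} := by
          ext w
          simp only [SimpleGraph.mem_neighborFinset, Finset.mem_singleton]
          exact ⟨fun hw => hleaf v w hiv hw, fun hw => hw ▸ hiv.symm⟩
        rw [← SimpleGraph.card_neighborFinset_eq_degree, hNv, Finset.card_singleton]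
      have hdegi : G.degree i = n - 1 := by
        have hNi : G.neighborFinset i = Finset.univ.erase i := by
          ext w
          simp only [SimpleGraph.mem_neighborFinset, Finset.mem_erase, Finset.mem_univ, and_true]
          exact ⟨fun hw => (G.ne_of_adj hw).symm, fun hw => (hstar w).resolve_left hw⟩
        rw [← SimpleGraph.card_neighborFinset_eq_degree, hNi,
          Finset.card_erase_of_mem (Finset.mem_univ i), Finset.card_univ, Fintype.card_fin]
      have hsum := G.sum_degrees_eq_twice_card_edges
      have hsplit : ∑ v, G.degree v = G.degree i + ∑ v ∈ Finset.univ.erase i, G.degree v :=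
        (Finset.add_sum_erase _ _ (Finset.mem_univ i)).symm
      have herase : ∑ v ∈ Finset.univ.erase i, G.degree v = n - 1 := by
        rw [Finset.sum_congr rfl (fun v hv => hdeg1 v (Finset.mem_erase.mp hv).1),
          Finset.sum_const, Finset.card_erase_of_mem (Finset.mem_univ i),
          Finset.card_univ, Fintype.card_fin, smul_eq_mul, mul_one]
      omega
    · -- star implies equality
      intro hm
      -- every edge is incident to i
      have hinc : ∀ x y, G.Adj x y → i = x ∨ i = y := by
        have hsub : G.incidenceFinset i ⊆ G.edgeFinset := by
          intro e he
          rw [SimpleGraph.mem_incidenceFinset] at he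
          exact SimpleGraph.mem_edgeFinset.mpr he.1
        have hcard : G.edgeFinset.card ≤ (G.incidenceFinset i).card := by
          rw [SimpleGraph.card_incidenceFinset_eq_degree]; omega
        have heq : G.incidenceFinset i = G.edgeFinset :=
          Finset.eq_of_subset_of_card_le hsub hcard
        intro x y hxy
        have he : s(x,y) ∈ G.edgeFinset := SimpleGraph.mem_edgeFinset.mpr hxy
        rw [← heq, SimpleGraph.mem_incidenceFinset] at he
        exact Sym2.mem_iff.mp he.2
      have hadj : ∀ v, v ≠ i → G.Adj i v := by
        intro v hv
        obtain ⟨p⟩ := hconn v i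
        cases p with
        | nil => exact absurd rfl hv
        | cons h q =>
          rcases hinc _ _ h with h1 | h2
          · exact absurd h1.symm hv
          · rw [← h2] at h; exact h.symm
      have hdeg1 : ∀ v, v ≠ i → G.degree v = 1 := by
        intro v hv
        have hNv : G.neighborFinset v = {i} := by
          ext w
          simp only [SimpleGraph.mem_neighborFinset, Finset.mem_singleton]
          constructor
          · intro hw
            rcases hinc v w hw with h1 | h2
            · exact absurd h1.symm hv
            · exact h2.symm
          · rintro rfl; exact (hadj v hv).symm
        rw [← SimpleGraph.card_neighborFinset_eq_degree, hNv, Finset.card_singleton]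
      have hdegi : G.degree i = n - 1 := by
        have hNi : G.neighborFinset i = Finset.univ.erase i := by
          ext w
          simp only [SimpleGraph.mem_neighborFinset, Finset.mem_erase, Finset.mem_univ, and_true]
          exact ⟨fun hw => (G.ne_of_adj hw).symm, fun hw => hadj w hw⟩
        rw [← SimpleGraph.card_neighborFinset_eq_degree, hNi,
          Finset.card_erase_of_mem (Finset.mem_univ i), Finset.card_univ, Fintype.card_fin]
      have hd0 : (G.degree i : ℝ) ≠ 0 := Nat.cast_ne_zero.mpr (hdpos i).ne'
      have hsumN : ∑ w ∈ G.neighborFinset i, 1 / (G.degree w : ℝ) = (G.degree i : ℝ) := by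
        have h1 : ∀ w ∈ G.neighborFinset i, 1 / (G.degree w : ℝ) = 1 := by
          intro w hw
          have hwi : G.Adj i w := (SimpleGraph.mem_neighborFinset _ _ _).mp hw
          rw [hdeg1 w (fun e => G.irrefl (e ▸ hwi))]
          norm_num
        rw [Finset.sum_congr rfl h1, Finset.sum_const, nsmul_eq_mul, mul_one,
          SimpleGraph.card_neighborFinset_eq_degree]
      have hRHS : Real.sqrt ((1 / (G.degree i : ℝ)) *
          ∑ w ∈ G.neighborFinset i, 1 / (G.degree w : ℝ)) = 1 := by
        rw [hsumN, one_div, inv_mul_cancel₀ hd0, Real.sqrt_one]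
      have hMii : ((normLap G - 1) * (normLap G - 1)ᵀ : Matrix (Fin n) (Fin n) ℝ) i i = 1 := by
        rw [M_diag', hsumN, one_div, inv_mul_cancel₀ hd0]
      -- explicit form of M
      have hMsym : ∀ a b : Fin n,
          ((normLap G - 1) * (normLap G - 1)ᵀ : Matrix (Fin n) (Fin n) ℝ) a b =
          ((normLap G - 1) * (normLap G - 1)ᵀ : Matrix (Fin n) (Fin n) ℝ) b a := by
        intro a b
        rw [M_apply', M_apply']
        exact Finset.sum_congr rfl fun k _ => mul_comm _ _
      have hMiy : ∀ y : Fin n, y ≠ i →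
          ((normLap G - 1) * (normLap G - 1)ᵀ : Matrix (Fin n) (Fin n) ℝ) i y = 0 := by
        intro y hy
        rw [M_apply']
        apply Finset.sum_eq_zero
        intro k _
        by_cases hk : G.Adj y k
        · rcases hinc y k hk with h1 | h2
          · exact absurd h1.symm hy
          · have : ¬ G.Adj i k := by rw [← h2]; exact G.irrefl
            simp [SimpleGraph.adjMatrix_apply, this]
        · simp [SimpleGraph.adjMatrix_apply, hk]
      have hMxy : ∀ x y : Fin n, x ≠ i → y ≠ i →
          ((normLap G - 1) * (normLap G - 1)ᵀ : Matrix (Fin n) (Fin n) ℝ) x y =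
          (G.degree i : ℝ)⁻¹ := by
        intro x y hx hy
        rw [M_apply']
        rw [Finset.sum_eq_single i ?_ ?_]
        · have hxi : G.Adj x i := (hadj x hx).symm
          have hyi : G.Adj y i := (hadj y hy).symm
          rw [hdeg1 x hx, hdeg1 y hy]
          simp only [SimpleGraph.adjMatrix_apply, if_pos hxi, if_pos hyi,
            Nat.cast_one, Real.sqrt_one, inv_one, one_mul, mul_one]
          exact sqrt_inv_mul_self' _
        · intro k _ hk
          have hnadj : ¬ G.Adj x k := by
            intro hc
            rcases hinc x k hc with h1 | h2
            exacts [hx h1.symm, hk h2.symm]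
          simp [SimpleGraph.adjMatrix_apply, hnadj]
        · intro hni; exact absurd (Finset.mem_univ i) hni
      have hME : ∀ x y : Fin n,
          ((normLap G - 1) * (normLap G - 1)ᵀ : Matrix (Fin n) (Fin n) ℝ) x y =
          if x = i then (if y = i then 1 else 0)
          else (if y = i then 0 else (G.degree i : ℝ)⁻¹) := by
        intro x y
        by_cases hx : x = i <;> by_cases hy : y = i
        · rw [hx, hy, if_pos rfl, if_pos rfl]; exact hMii
        · rw [hx, if_pos rfl, if_neg hy]; exact hMiy y hy
        · rw [if_neg hx, hy, if_pos rfl, hMsym x i]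
          exact hMiy x hx
        · rw [if_neg hx, if_neg hy]; exact hMxy x y hx hy
      have hdcast : (G.degree i : ℝ) = (n : ℝ) - 1 := by
        rw [hdegi, Nat.cast_sub (by omega), Nat.cast_one]
      have hMM : ((normLap G - 1) * (normLap G - 1)ᵀ : Matrix (Fin n) (Fin n) ℝ) *
          ((normLap G - 1) * (normLap G - 1)ᵀ) = (normLap G - 1) * (normLap G - 1)ᵀ := by
        ext x y
        rw [Matrix.mul_apply]
        simp_rw [hME]
        by_cases hx : x = i
        · rw [Finset.sum_eq_single i ?_ ?_]
          · simp [hx]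
          · intro k _ hk; simp [hx, hk]
          · intro hni; exact absurd (Finset.mem_univ i) hni
        · by_cases hy : y = i
          · rw [Finset.sum_eq_single i ?_ ?_]
            · simp [hx, hy]
            · intro k _ hk; simp [hx, hy, hk]
            · intro hni; exact absurd (Finset.mem_univ i) hni
          · have hterm : ∀ k : Fin n,
                (if x = i then (if k = i then (1:ℝ) else 0)
                  else (if k = i then 0 else (G.degree i : ℝ)⁻¹)) *
                (if k = i then (if y = i then (1:ℝ) else 0)
                  else (if y = i then 0 else (G.degree i : ℝ)⁻¹)) =
                (G.degree i : ℝ)⁻¹ * (G.degree i : ℝ)⁻¹ -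
                  (if k = i then (G.degree i : ℝ)⁻¹ * (G.degree i : ℝ)⁻¹ else 0) := by
              intro k
              by_cases hk : k = i <;> simp [hx, hy, hk]
            rw [Finset.sum_congr rfl fun k _ => hterm k, Finset.sum_sub_distrib,
              Finset.sum_const, Finset.sum_ite_eq' Finset.univ i
                (fun _ => (G.degree i : ℝ)⁻¹ * (G.degree i : ℝ)⁻¹),
              if_pos (Finset.mem_univ i), Finset.card_univ, Fintype.card_fin,
              nsmul_eq_mul, if_neg hx, if_neg hy]
            have hne : (n : ℝ) = (G.degree i : ℝ) + 1 := by rw [hdcast]; ring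
            rw [hne]
            field_simp
            ring
      have hMfix : ((normLap G - 1) * (normLap G - 1)ᵀ : Matrix (Fin n) (Fin n) ℝ) =
          hMpsd.sqrt := hMpsd.eq_sqrt_of_sq_eq hMpsd (by rw [sq, hMM])
      show matAbs (normLap G - 1) i i = _
      rw [habs, ← hMfix, hMii, hRHS]
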